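/- (Weighted Poincaré-type interpolation.) Let $\lambda > 0$, $\tau \in \mathbb{R}$, and let $u, u^0 : \mathbb{R} \to \mathbb{R}$ be $C^2$ functions with $\|u - u^0\|_{L^\infty(\mathbb{R})} \leq A$ for some $A > 0$, and such that the weighted norms $X = \int_{\mathbb{R}} e^{-\lambda|t-\tau|}(u'(t) - (u^0)'(t))^2 dt$ and $Y = \int_{\mathbb{R}} e^{-\lambda|t-\tau|}(u''(t) - (u^0)''(t))^2 dt$ are finite. Then there is an absolute constant $C > 0$ such that $X^2 \leq C\left( \lambda^2 A^4 + \lambda^{-1} A^2\, Y \right)$. -/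

import Mathlib

open MeasureTheory Real Set Filter Topology

lemma poincare_exp_aux (lam τ : ℝ) (hlam : 0 < lam) :
    Integrable (fun t : ℝ => exp (-(lam * |t - τ|))) ∧
      (∫ t : ℝ, exp (-(lam * |t - τ|))) = 2 / lam := by
  -- Ioi part
  have hGd : ∀ x ∈ Ioi τ, HasDerivAt (fun t : ℝ => -(1/lam) * exp (-(lam * (t - τ))))
      (exp (-(lam * |x - τ|))) x := by
    intro x hx
    have h1 : HasDerivAt (fun t : ℝ => -(lam * (t - τ))) (-lam) x := by
      simpa using (((hasDerivAt_id x).sub_const τ).const_mul lam).fun_neg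
    have h2 := (h1.exp).const_mul (-(1/lam))
    refine h2.congr_deriv ?_
    rw [abs_of_pos (sub_pos.mpr hx)]
    field_simp
  have hGtop : Tendsto (fun t : ℝ => -(1/lam) * exp (-(lam * (t - τ)))) atTop (𝓝 0) := by
    have h0 : Tendsto (fun t : ℝ => t - τ) atTop atTop := by
      simpa [sub_eq_add_neg] using tendsto_atTop_add_const_right atTop (-τ) tendsto_id
    have h1 : Tendsto (fun t : ℝ => -(lam * (t - τ))) atTop atBot :=
      tendsto_neg_atTop_atBot.comp (h0.const_mul_atTop hlam)
    have h2 := (Real.tendsto_exp_atBot).comp h1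
    simpa using h2.const_mul (-(1/lam))
  have hGc : Continuous (fun t : ℝ => -(1/lam) * exp (-(lam * (t - τ)))) := by fun_prop
  have hEIoi : IntegrableOn (fun t : ℝ => exp (-(lam * |t - τ|))) (Ioi τ) :=
    integrableOn_Ioi_deriv_of_nonneg hGc.continuousWithinAt hGd (fun x _ => (exp_pos _).le) hGtop
  have IIoi : (∫ t in Ioi τ, exp (-(lam * |t - τ|))) = 1 / lam := by
    rw [integral_Ioi_of_hasDerivAt_of_tendsto hGc.continuousWithinAt hGd hEIoi hGtop]
    simp
  -- reflection: Iio part integrability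
  have refl_mp : MeasurePreserving (fun x : ℝ => 2*τ + -x) volume volume :=
    (measurePreserving_add_left volume (2*τ)).comp (Measure.measurePreserving_neg volume)
  have refl_emb : MeasurableEmbedding (fun x : ℝ => 2*τ + -x) :=
    ((Homeomorph.neg ℝ).trans (Homeomorph.addLeft (2*τ))).measurableEmbedding
  have hcomp := (refl_mp.integrableOn_comp_preimage refl_emb).2 hEIoi
  have hpre : (fun x : ℝ => 2*τ + -x) ⁻¹' (Ioi τ) = Iio τ := by
    ext x; simp only [mem_preimage, mem_Ioi, mem_Iio]; constructor <;> intro h <;> linarith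
  have hfun : ((fun t : ℝ => exp (-(lam * |t - τ|))) ∘ (fun x : ℝ => 2*τ + -x))
      = (fun t : ℝ => exp (-(lam * |t - τ|))) := by
    funext x
    simp only [Function.comp_apply]
    congr 2
    have h : 2*τ + -x - τ = τ - x := by ring
    rw [h, abs_sub_comm]
  have hEIio : IntegrableOn (fun t : ℝ => exp (-(lam * |t - τ|))) (Iio τ) := by
    rw [hpre, hfun] at hcomp; exact hcomp
  have hEIic : IntegrableOn (fun t : ℝ => exp (-(lam * |t - τ|))) (Iic τ) :=
    hEIio.congr_set_ae Iio_ae_eq_Iic.symm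
  -- Iic value
  have hHd : ∀ x ∈ Iio τ, HasDerivAt (fun t : ℝ => (1/lam) * exp (lam * (t - τ)))
      (exp (-(lam * |x - τ|))) x := by
    intro x hx
    have h1 : HasDerivAt (fun t : ℝ => lam * (t - τ)) lam x := by
      simpa using ((hasDerivAt_id x).sub_const τ).const_mul lam
    have h2 := (h1.exp).const_mul (1/lam)
    refine h2.congr_deriv ?_
    rw [abs_of_neg (sub_neg.mpr hx)]
    rw [show -(lam * -(x - τ)) = lam * (x - τ) by ring]
    field_simp
  have hHbot : Tendsto (fun t : ℝ => (1/lam) * exp (lam * (t - τ))) atBot (𝓝 0) := by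
    have h0 : Tendsto (fun t : ℝ => t - τ) atBot atBot := by
      simpa [sub_eq_add_neg] using tendsto_atBot_add_const_right atBot (-τ) tendsto_id
    have h1 : Tendsto (fun t : ℝ => lam * (t - τ)) atBot atBot := h0.const_mul_atBot hlam
    have h2 := (Real.tendsto_exp_atBot).comp h1
    simpa using h2.const_mul (1/lam)
  have hHc : Continuous (fun t : ℝ => (1/lam) * exp (lam * (t - τ))) := by fun_prop
  have IIic : (∫ t in Iic τ, exp (-(lam * |t - τ|))) = 1 / lam := by
    rw [integral_Iic_of_hasDerivAt_of_tendsto hHc.continuousWithinAt hHd hEIic hHbot]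
    simp
  have hInt : Integrable (fun t : ℝ => exp (-(lam * |t - τ|))) := by
    rw [← integrableOn_univ, ← Set.Iic_union_Ioi (a := τ)]
    exact hEIic.union hEIoi
  refine ⟨hInt, ?_⟩
  have h := integral_add_compl (measurableSet_Iic (a := τ)) hInt
  rw [compl_Iic, IIic, IIoi] at h
  rw [← h]; ring

lemma poincare_ibp_aux (lam τ : ℝ) (hlam : 0 < lam) (φ dφ : ℝ → ℝ)
    (hd : ∀ t, HasDerivAt φ (dφ t) t)
    (h1 : Integrable (fun t : ℝ => exp (-(lam * |t - τ|)) * φ t))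
    (h2 : Integrable (fun t : ℝ => exp (-(lam * |t - τ|)) * dφ t)) :
    (∫ t : ℝ, exp (-(lam * |t - τ|)) * dφ t) ≤
      lam * ∫ t : ℝ, exp (-(lam * |t - τ|)) * |φ t| := by
  have hφc : Continuous φ := by
    refine continuous_iff_continuousAt.mpr fun t => (hd t).continuousAt
  have hEc : Continuous (fun t : ℝ => exp (-(lam * |t - τ|))) := by fun_prop
  have hψc : Continuous (fun t : ℝ => exp (-(lam * |t - τ|)) * φ t) := hEc.mul hφc
  have h1abs : Integrable (fun t : ℝ => exp (-(lam * |t - τ|)) * |φ t|) := by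
    refine h1.abs.congr (Filter.Eventually.of_forall fun t => ?_)
    show |rexp (-(lam * |t - τ|)) * φ t| = _
    rw [abs_mul, abs_of_pos (exp_pos _)]
  -- derivative on the right half line
  have hdIoi : ∀ x ∈ Ioi τ, HasDerivAt (fun t : ℝ => exp (-(lam * |t - τ|)) * φ t)
      (exp (-(lam * |x - τ|)) * dφ x - lam * (exp (-(lam * |x - τ|)) * φ x)) x := by
    intro x hx
    have h1' : HasDerivAt (fun t : ℝ => -(lam * (t - τ))) (-lam) x := by
      simpa using (((hasDerivAt_id x).sub_const τ).const_mul lam).fun_neg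
    have h2' := (h1'.exp).mul (hd x)
    have heq : (fun t : ℝ => exp (-(lam * |t - τ|)) * φ t)
        =ᶠ[𝓝 x] (fun t : ℝ => exp (-(lam * (t - τ))) * φ t) := by
      filter_upwards [Ioi_mem_nhds hx] with t ht
      rw [abs_of_pos (sub_pos.mpr ht)]
    have h3 := h2'.congr_of_eventuallyEq heq
    refine h3.congr_deriv ?_
    rw [abs_of_pos (sub_pos.mpr hx)]
    ring
  -- derivative on the left half line
  have hdIio : ∀ x ∈ Iio τ, HasDerivAt (fun t : ℝ => exp (-(lam * |t - τ|)) * φ t)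
      (exp (-(lam * |x - τ|)) * dφ x + lam * (exp (-(lam * |x - τ|)) * φ x)) x := by
    intro x hx
    have h1' : HasDerivAt (fun t : ℝ => lam * (t - τ)) lam x := by
      simpa using ((hasDerivAt_id x).sub_const τ).const_mul lam
    have h2' := (h1'.exp).mul (hd x)
    have heq : (fun t : ℝ => exp (-(lam * |t - τ|)) * φ t)
        =ᶠ[𝓝 x] (fun t : ℝ => exp (lam * (t - τ)) * φ t) := by
      filter_upwards [Iio_mem_nhds hx] with t ht
      rw [abs_of_neg (sub_neg.mpr ht)]
      rw [show -(lam * -(t - τ)) = lam * (t - τ) by ring]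
    have h3 := h2'.congr_of_eventuallyEq heq
    refine h3.congr_deriv ?_
    rw [abs_of_neg (sub_neg.mpr hx)]
    rw [show -(lam * -(x - τ)) = lam * (x - τ) by ring]
    ring
  -- FTC on the right half line
  have hψ'Ioi : IntegrableOn (fun t : ℝ => exp (-(lam * |t - τ|)) * dφ t
      - lam * (exp (-(lam * |t - τ|)) * φ t)) (Ioi τ) :=
    (h2.sub (h1.const_mul lam)).integrableOn
  have htop : Tendsto (fun t : ℝ => exp (-(lam * |t - τ|)) * φ t) atTop (𝓝 0) :=
    tendsto_zero_of_hasDerivAt_of_integrableOn_Ioi hdIoi hψ'Ioi h1.integrableOn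
  have hIoi : (∫ t in Ioi τ, (exp (-(lam * |t - τ|)) * dφ t
      - lam * (exp (-(lam * |t - τ|)) * φ t))) = 0 - exp (-(lam * |τ - τ|)) * φ τ :=
    integral_Ioi_of_hasDerivAt_of_tendsto hψc.continuousWithinAt hdIoi hψ'Ioi htop
  -- FTC on the left half line
  have hψ'Iic : IntegrableOn (fun t : ℝ => exp (-(lam * |t - τ|)) * dφ t
      + lam * (exp (-(lam * |t - τ|)) * φ t)) (Iic τ) :=
    (h2.add (h1.const_mul lam)).integrableOn
  have hbot : Tendsto (fun t : ℝ => exp (-(lam * |t - τ|)) * φ t) atBot (𝓝 0) := by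
    refine tendsto_zero_of_hasDerivAt_of_integrableOn_Iic (a := τ - 1)
      (fun x hx => hdIio x ?_) ((h2.add (h1.const_mul lam)).integrableOn) h1.integrableOn
    have : x ≤ τ - 1 := hx
    simp only [mem_Iio]; linarith
  have hIic : (∫ t in Iic τ, (exp (-(lam * |t - τ|)) * dφ t
      + lam * (exp (-(lam * |t - τ|)) * φ t))) = exp (-(lam * |τ - τ|)) * φ τ - 0 :=
    integral_Iic_of_hasDerivAt_of_tendsto hψc.continuousWithinAt hdIio hψ'Iic hbot
  -- rearrange
  have eIoi : (∫ t in Ioi τ, exp (-(lam * |t - τ|)) * dφ t)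
      = lam * (∫ t in Ioi τ, exp (-(lam * |t - τ|)) * φ t) - exp (-(lam * |τ - τ|)) * φ τ := by
    rw [integral_sub h2.integrableOn ((h1.const_mul lam).integrableOn),
      integral_const_mul] at hIoi
    linarith
  have eIic : (∫ t in Iic τ, exp (-(lam * |t - τ|)) * dφ t)
      = -(lam * (∫ t in Iic τ, exp (-(lam * |t - τ|)) * φ t)) + exp (-(lam * |τ - τ|)) * φ τ := by
    rw [integral_add h2.integrableOn ((h1.const_mul lam).integrableOn),
      integral_const_mul] at hIic
    linarith
  have split : (∫ t : ℝ, exp (-(lam * |t - τ|)) * dφ t)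
      = (∫ t in Iic τ, exp (-(lam * |t - τ|)) * dφ t)
        + (∫ t in Ioi τ, exp (-(lam * |t - τ|)) * dφ t) := by
    have h := integral_add_compl (measurableSet_Iic (a := τ)) h2
    rw [compl_Iic] at h
    linarith
  have splitabs : (∫ t : ℝ, exp (-(lam * |t - τ|)) * |φ t|)
      = (∫ t in Iic τ, exp (-(lam * |t - τ|)) * |φ t|)
        + (∫ t in Ioi τ, exp (-(lam * |t - τ|)) * |φ t|) := by
    have h := integral_add_compl (measurableSet_Iic (a := τ)) h1abs
    rw [compl_Iic] at h
    linarith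
  have b1 : (∫ t in Ioi τ, exp (-(lam * |t - τ|)) * φ t)
      ≤ ∫ t in Ioi τ, exp (-(lam * |t - τ|)) * |φ t| := by
    refine integral_mono h1.integrableOn h1abs.integrableOn fun t => ?_
    exact mul_le_mul_of_nonneg_left (le_abs_self _) (exp_pos _).le
  have b2 : -(∫ t in Iic τ, exp (-(lam * |t - τ|)) * φ t)
      ≤ ∫ t in Iic τ, exp (-(lam * |t - τ|)) * |φ t| := by
    rw [← integral_neg]
    refine integral_mono h1.neg.integrableOn h1abs.integrableOn fun t => ?_
    simp only [Pi.neg_apply]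
    rw [show -(exp (-(lam * |t - τ|)) * φ t) = exp (-(lam * |t - τ|)) * (-φ t) by ring]
    exact mul_le_mul_of_nonneg_left (neg_le_abs _) (exp_pos _).le
  calc (∫ t : ℝ, exp (-(lam * |t - τ|)) * dφ t)
      = lam * ((∫ t in Ioi τ, exp (-(lam * |t - τ|)) * φ t)
          - (∫ t in Iic τ, exp (-(lam * |t - τ|)) * φ t)) := by
        rw [split, eIic, eIoi]; ring
    _ ≤ lam * ((∫ t in Ioi τ, exp (-(lam * |t - τ|)) * |φ t|)
          + (∫ t in Iic τ, exp (-(lam * |t - τ|)) * |φ t|)) := by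
        apply mul_le_mul_of_nonneg_left _ hlam.le
        linarith
    _ = lam * ∫ t : ℝ, exp (-(lam * |t - τ|)) * |φ t| := by rw [splitabs]; ring

set_option maxHeartbeats 1000000 in
lemma poincare_core_aux (lam τ A : ℝ) (hlam : 0 < lam) (hA : 0 < A)
    (w f g : ℝ → ℝ)
    (hwd : ∀ t, HasDerivAt w (f t) t)
    (hfd : ∀ t, HasDerivAt f (g t) t)
    (hgc : Continuous g)
    (hbd : ∀ t, |w t| ≤ A)
    (hX : Integrable (fun t : ℝ => exp (-(lam * |t - τ|)) * f t ^ 2))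
    (hY : Integrable (fun t : ℝ => exp (-(lam * |t - τ|)) * g t ^ 2)) :
    (∫ t : ℝ, exp (-(lam * |t - τ|)) * f t ^ 2) ^ 2 ≤
      32 * (lam ^ 2 * A ^ 4 + lam⁻¹ * A ^ 2 * ∫ t : ℝ, exp (-(lam * |t - τ|)) * g t ^ 2) := by
  obtain ⟨hEint, hEval⟩ := poincare_exp_aux lam τ hlam
  have hEc : Continuous (fun t : ℝ => exp (-(lam * |t - τ|))) := by fun_prop
  have hfc : Continuous f := continuous_iff_continuousAt.mpr fun t => (hfd t).continuousAt
  have hwc : Continuous w := continuous_iff_continuousAt.mpr fun t => (hwd t).continuousAt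
  have young : ∀ (ε y : ℝ), 0 < ε → |y| ≤ ε * y ^ 2 + 1/(4*ε) := by
    intro ε y hε
    have key : ε * (ε * y ^ 2 + 1/(4*ε) - |y|) = (ε * |y| - 1/2) ^ 2 := by
      have h := sq_abs y
      field_simp
      linear_combination (-16*ε^2) * h
    nlinarith [key, sq_nonneg (ε * |y| - 1/2), hε]
  -- integrability of E|f|, E|g|
  have hEabsf : Integrable (fun t : ℝ => exp (-(lam * |t - τ|)) * |f t|) := by
    refine Integrable.mono' ((hEint.add hX).const_mul (1/2))
      ((hEc.mul hfc.abs).aestronglyMeasurable) (.of_forall fun t => ?_)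
    rw [Real.norm_eq_abs, abs_of_nonneg (mul_nonneg (exp_pos _).le (abs_nonneg _))]
    simp only [Pi.add_apply]
    nlinarith [mul_le_mul_of_nonneg_left (young (1/2) (f t) (by norm_num))
      (exp_pos (-(lam * |t - τ|))).le]
  have hEabsg : Integrable (fun t : ℝ => exp (-(lam * |t - τ|)) * |g t|) := by
    refine Integrable.mono' ((hEint.add hY).const_mul (1/2))
      ((hEc.mul hgc.abs).aestronglyMeasurable) (.of_forall fun t => ?_)
    rw [Real.norm_eq_abs, abs_of_nonneg (mul_nonneg (exp_pos _).le (abs_nonneg _))]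
    simp only [Pi.add_apply]
    nlinarith [mul_le_mul_of_nonneg_left (young (1/2) (g t) (by norm_num))
      (exp_pos (-(lam * |t - τ|))).le]
  -- integrability of E(wf), E(wg)
  have hEwf : Integrable (fun t : ℝ => exp (-(lam * |t - τ|)) * (w t * f t)) := by
    refine Integrable.mono' (hEabsf.const_mul A)
      ((hEc.mul (hwc.mul hfc)).aestronglyMeasurable) (.of_forall fun t => ?_)
    rw [Real.norm_eq_abs, abs_mul, abs_of_pos (exp_pos _), abs_mul]
    nlinarith [mul_le_mul_of_nonneg_left (hbd t)
      (mul_nonneg (exp_pos (-(lam * |t - τ|))).le (abs_nonneg (f t))), abs_nonneg (f t)]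
  have hEwg : Integrable (fun t : ℝ => exp (-(lam * |t - τ|)) * (w t * g t)) := by
    refine Integrable.mono' (hEabsg.const_mul A)
      ((hEc.mul (hwc.mul hgc)).aestronglyMeasurable) (.of_forall fun t => ?_)
    rw [Real.norm_eq_abs, abs_mul, abs_of_pos (exp_pos _), abs_mul]
    nlinarith [mul_le_mul_of_nonneg_left (hbd t)
      (mul_nonneg (exp_pos (-(lam * |t - τ|))).le (abs_nonneg (g t))), abs_nonneg (g t)]
  have hEphi' : Integrable (fun t : ℝ => exp (-(lam * |t - τ|)) * (f t ^ 2 + w t * g t)) := by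
    have hrw : (fun t : ℝ => exp (-(lam * |t - τ|)) * (f t ^ 2 + w t * g t))
        = fun t : ℝ => exp (-(lam * |t - τ|)) * f t ^ 2
          + exp (-(lam * |t - τ|)) * (w t * g t) := by
      funext t; ring
    rw [hrw]; exact hX.add hEwg
  have hphid : ∀ t, HasDerivAt (fun t => w t * f t) (f t ^ 2 + w t * g t) t := by
    intro t
    have h := (hwd t).mul (hfd t)
    rw [show f t ^ 2 + w t * g t = f t * f t + w t * g t by ring]
    exact h
  have key1 : (∫ t : ℝ, exp (-(lam * |t - τ|)) * (f t ^ 2 + w t * g t))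
      ≤ lam * ∫ t : ℝ, exp (-(lam * |t - τ|)) * |w t * f t| :=
    poincare_ibp_aux lam τ hlam (fun t => w t * f t)
      (fun t => f t ^ 2 + w t * g t) hphid hEwf hEphi'
  -- |∫ E w f| bound
  have habs_wf : Integrable (fun t : ℝ => exp (-(lam * |t - τ|)) * |w t * f t|) := by
    refine hEwf.abs.congr (Filter.Eventually.of_forall fun t => ?_)
    show |exp (-(lam * |t - τ|)) * (w t * f t)| = _
    rw [abs_mul, abs_of_pos (exp_pos _)]
  have b_wf : (∫ t : ℝ, exp (-(lam * |t - τ|)) * |w t * f t|)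
      ≤ A * ∫ t : ℝ, exp (-(lam * |t - τ|)) * |f t| := by
    have h := integral_mono habs_wf (hEabsf.const_mul A) (fun t => ?_)
    · rwa [integral_const_mul] at h
    · show exp (-(lam * |t - τ|)) * |w t * f t| ≤ A * (exp (-(lam * |t - τ|)) * |f t|)
      rw [abs_mul]
      nlinarith [mul_le_mul_of_nonneg_left (hbd t)
        (mul_nonneg (exp_pos (-(lam * |t - τ|))).le (abs_nonneg (f t))), abs_nonneg (f t)]
  have b_wg : -(∫ t : ℝ, exp (-(lam * |t - τ|)) * (w t * g t))
      ≤ A * ∫ t : ℝ, exp (-(lam * |t - τ|)) * |g t| := by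
    rw [← integral_neg]
    have h := integral_mono hEwg.neg (hEabsg.const_mul A) (fun t => ?_)
    · rwa [integral_const_mul] at h
    · show -(exp (-(lam * |t - τ|)) * (w t * g t)) ≤ A * (exp (-(lam * |t - τ|)) * |g t|)
      have h3 : -(w t * g t) ≤ A * |g t| := by
        have := mul_le_mul_of_nonneg_right (hbd t) (abs_nonneg (g t))
        have h4 := neg_abs_le (w t * g t)
        rw [abs_mul] at h4
        linarith
      nlinarith [mul_le_mul_of_nonneg_left h3 (exp_pos (-(lam * |t - τ|))).le]
  -- Young bounds on the integrals
  have yb : ∀ (h : ℝ → ℝ), Integrable (fun t : ℝ => exp (-(lam * |t - τ|)) * h t ^ 2) →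
      Integrable (fun t : ℝ => exp (-(lam * |t - τ|)) * |h t|) →
      ∀ ε : ℝ, 0 < ε → (∫ t : ℝ, exp (-(lam * |t - τ|)) * |h t|)
        ≤ ε * (∫ t : ℝ, exp (-(lam * |t - τ|)) * h t ^ 2) + (1/(4*ε)) * (2/lam) := by
    intro h hh2 hhabs ε hε
    have hi : Integrable (fun t : ℝ => ε * (exp (-(lam * |t - τ|)) * h t ^ 2)
        + (1/(4*ε)) * exp (-(lam * |t - τ|))) := (hh2.const_mul ε).add (hEint.const_mul _)
    have hm := integral_mono hhabs hi (fun t => ?_)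
    · rw [integral_add (hh2.const_mul ε) (hEint.const_mul _), integral_const_mul,
        integral_const_mul, hEval] at hm
      exact hm
    · show exp (-(lam * |t - τ|)) * |h t| ≤ _
      nlinarith [mul_le_mul_of_nonneg_left (young ε (h t) hε) (exp_pos (-(lam * |t - τ|))).le]
  -- main chain
  set X := ∫ t : ℝ, exp (-(lam * |t - τ|)) * f t ^ 2 with hXdef
  set Y := ∫ t : ℝ, exp (-(lam * |t - τ|)) * g t ^ 2 with hYdef
  have Xnn : 0 ≤ X := integral_nonneg fun t => by positivity
  have Ynn : 0 ≤ Y := integral_nonneg fun t => by positivity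
  have eq1 : (∫ t : ℝ, exp (-(lam * |t - τ|)) * (f t ^ 2 + w t * g t))
      = X + ∫ t : ℝ, exp (-(lam * |t - τ|)) * (w t * g t) := by
    have hrw : (fun t : ℝ => exp (-(lam * |t - τ|)) * (f t ^ 2 + w t * g t))
        = fun t : ℝ => exp (-(lam * |t - τ|)) * f t ^ 2
          + exp (-(lam * |t - τ|)) * (w t * g t) := by
      funext t; ring
    rw [hrw, integral_add hX hEwg]
  have key : ∀ ε : ℝ, 0 < ε → X ≤ 2*lam*A^2 + 2*A*ε*Y + A/(ε*lam) := by
    intro ε hε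
    have hε₁ : (0:ℝ) < 1/(2*lam*A) := by positivity
    have yf := yb f hX hEabsf (1/(2*lam*A)) hε₁
    have yg := yb g hY hEabsg ε hε
    have step1 : X ≤ lam * (A * ∫ t : ℝ, exp (-(lam * |t - τ|)) * |f t|)
        + A * ∫ t : ℝ, exp (-(lam * |t - τ|)) * |g t| := by
      have h5 := mul_le_mul_of_nonneg_left b_wf hlam.le
      linarith [key1, eq1, b_wg]
    have h6 : lam * (A * (∫ t : ℝ, exp (-(lam * |t - τ|)) * |f t|))
        ≤ lam * (A * ((1/(2*lam*A)) * X + (1/(4*(1/(2*lam*A)))) * (2/lam))) := by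
      apply mul_le_mul_of_nonneg_left _ hlam.le
      exact mul_le_mul_of_nonneg_left yf hA.le
    have h7 : A * (∫ t : ℝ, exp (-(lam * |t - τ|)) * |g t|)
        ≤ A * (ε * Y + (1/(4*ε)) * (2/lam)) :=
      mul_le_mul_of_nonneg_left yg hA.le
    have e1 : lam * (A * ((1/(2*lam*A)) * X + (1/(4*(1/(2*lam*A)))) * (2/lam)))
        = X/2 + lam*A^2 := by field_simp; ring
    have e2 : A * (ε * Y + (1/(4*ε)) * (2/lam)) = A*ε*Y + A/(2*ε*lam) := by
      field_simp; ring
    have e3 : A/(2*ε*lam) = (A/(ε*lam))/2 := by ring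
    linarith
  clear_value X Y
  rcases eq_or_lt_of_le Ynn with hY0 | hYpos
  · have hXb : X ≤ 2*lam*A^2 := by
      refine le_of_forall_pos_le_add fun δ hδ => ?_
      have hεδ : (0:ℝ) < A/(lam*δ) := by positivity
      have h := key (A/(lam*δ)) hεδ
      have e4 : A/((A/(lam*δ))*lam) = δ := by field_simp
      rw [← hY0] at h
      rw [e4] at h
      linarith
    rw [← hY0]
    nlinarith [sq_nonneg (lam*A^2), pow_le_pow_left₀ Xnn hXb 2]
  · set s := Real.sqrt (lam * Y) with hsdef
    have hspos : 0 < s := Real.sqrt_pos.mpr (mul_pos hlam hYpos)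
    have hs2 : s^2 = lam * Y := Real.sq_sqrt (mul_pos hlam hYpos).le
    clear_value s
    have hYY : Y = s^2/lam := by field_simp [hs2]; linarith
    have hkey := key (1/s) (by positivity)
    have e5 : 2*A*(1/s)*Y + A/((1/s)*lam) = 3*(A*s/lam) := by
      rw [hYY]; field_simp; ring
    have hkey2 : X ≤ 2*lam*A^2 + 3*(A*s/lam) := by linarith
    have e6 : lam⁻¹ * A^2 * Y = (A*s/lam)^2 := by
      rw [hYY]; field_simp
    rw [e6]
    nlinarith [pow_le_pow_left₀ Xnn hkey2 2, sq_nonneg (2*lam*A^2 - 3*(A*s/lam)),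
      sq_nonneg (lam*A^2), sq_nonneg (A*s/lam)]

/-- Weighted Poincaré-type interpolation (Lemma "poincare1"): with
`X = ∫ e^{-λ|t-τ|}(u' - u⁰')²` and `Y = ∫ e^{-λ|t-τ|}(u'' - u⁰'')²`, and
`‖u - u⁰‖_∞ ≤ A`, one has `X² ≤ C (λ² A⁴ + λ⁻¹ A² Y)` for an absolute constant `C`. -/
theorem stmt14 : ∃ C > (0:ℝ), ∀ (lam τ A : ℝ), 0 < lam → 0 < A →
    ∀ u u0 : ℝ → ℝ, ContDiff ℝ 2 u → ContDiff ℝ 2 u0 →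
    (∀ t, |u t - u0 t| ≤ A) →
    MeasureTheory.Integrable
      (fun t => Real.exp (-(lam * |t - τ|)) * (deriv u t - deriv u0 t) ^ 2) →
    MeasureTheory.Integrable
      (fun t => Real.exp (-(lam * |t - τ|)) * (deriv (deriv u) t - deriv (deriv u0) t) ^ 2) →
    (∫ t : ℝ, Real.exp (-(lam * |t - τ|)) * (deriv u t - deriv u0 t) ^ 2) ^ 2 ≤
      C * (lam ^ 2 * A ^ 4 + lam⁻¹ * A ^ 2 *
        ∫ t : ℝ, Real.exp (-(lam * |t - τ|)) * (deriv (deriv u) t - deriv (deriv u0) t) ^ 2) := by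
  refine ⟨32, by norm_num, ?_⟩
  intro lam τ A hlam hA u u0 hu hu0 hbd hX hY
  have h12 : (1 + 1 : WithTop ℕ∞) = 2 := by norm_num
  have hu' : ContDiff ℝ (1 + 1 : WithTop ℕ∞) u := by rw [h12]; exact hu
  have hu0' : ContDiff ℝ (1 + 1 : WithTop ℕ∞) u0 := by rw [h12]; exact hu0
  have hdu : ContDiff ℝ 1 (deriv u) := (contDiff_succ_iff_deriv.mp hu').2.2
  have hdu0 : ContDiff ℝ 1 (deriv u0) := (contDiff_succ_iff_deriv.mp hu0').2.2
  have hwd : ∀ t, HasDerivAt (fun t => u t - u0 t) (deriv u t - deriv u0 t) t := fun t =>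
    ((hu.differentiable two_ne_zero t).hasDerivAt).sub
      ((hu0.differentiable two_ne_zero t).hasDerivAt)
  have hfd : ∀ t, HasDerivAt (fun t => deriv u t - deriv u0 t)
      (deriv (deriv u) t - deriv (deriv u0) t) t := fun t =>
    ((hdu.differentiable one_ne_zero t).hasDerivAt).sub ((hdu0.differentiable one_ne_zero t).hasDerivAt)
  have hgc : Continuous (fun t => deriv (deriv u) t - deriv (deriv u0) t) := by
    have h1 : Continuous (deriv (deriv u)) := (contDiff_one_iff_deriv.mp hdu).2
    have h2 : Continuous (deriv (deriv u0)) := (contDiff_one_iff_deriv.mp hdu0).2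
    exact h1.sub h2
  exact poincare_core_aux lam τ A hlam hA (fun t => u t - u0 t)
    (fun t => deriv u t - deriv u0 t) (fun t => deriv (deriv u) t - deriv (deriv u0) t)
    hwd hfd hgc hbd hX hY
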